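/- L^p-continuity of the p-Laplace flux in the degenerate range: let p ∈ [2, ∞) with conjugate exponent p' = p/(p−1). There exists a constant C > 0 depending only on p such that for every measure space (Ω, μ) and all measurable f, g : Ω → ℝ^d with ‖f‖_{L^p(μ)} < ∞ and ‖g‖_{L^p(μ)} < ∞, one has ‖A∘f − A∘g‖_{L^{p'}(μ)} ≤ C ‖f − g‖_{L^p(μ)} (‖f‖_{L^p(μ)} + ‖g‖_{L^p(μ)})^{p−2}. -/

import Mathlib

open MeasureTheory

/-- The p-Laplace flux `A(τ) = |τ|^{p-2} τ` (with `A(0) = 0`). -/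
noncomputable def pFlux (d : ℕ) (p : ℝ) (τ : EuclideanSpace ℝ (Fin d)) :
    EuclideanSpace ℝ (Fin d) := ‖τ‖ ^ (p - 2) • τ

/-- The `L^q` norm `(∫_Ω |h|^q dμ)^{1/q}` of a vector-valued function, in `[0, ∞]`. -/
noncomputable def vecLpNorm {Ω : Type*} [MeasurableSpace Ω] (μ : Measure Ω) {d : ℕ}
    (h : Ω → EuclideanSpace ℝ (Fin d)) (q : ℝ) : ENNReal :=
  (∫⁻ ω, ENNReal.ofReal (‖h ω‖ ^ q) ∂μ) ^ (1 / q)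

lemma scalar_key_le_one {q x y : ℝ} (hq0 : 0 ≤ q) (hq1 : q ≤ 1) (hx : 0 ≤ x)
    (hxy : x ≤ y) : x * (y ^ q - x ^ q) ≤ (y - x) * y ^ q := by
  rcases eq_or_lt_of_le hx with h0 | hx0
  · rw [← h0]
    have h1 : 0 ≤ y ^ q := Real.rpow_nonneg (le_trans hx hxy) q
    nlinarith
  have hy0 : 0 < y := lt_of_lt_of_le hx0 hxy
  have e1 : x ^ (q + 1) = x ^ q * x := Real.rpow_add_one (ne_of_gt hx0) q
  have e2 : y ^ (q - 1) * y = y ^ q := by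
    rw [← Real.rpow_add_one (ne_of_gt hy0)]
    ring_nf
  have h3 : x ^ 2 * y ^ (q - 1) ≤ x ^ (q + 1) := by
    have hbase : y ^ (q - 1) ≤ x ^ (q - 1) :=
      Real.rpow_le_rpow_of_nonpos hx0 hxy (by linarith)
    have hsplit : x ^ (q + 1) = x ^ (2 : ℝ) * x ^ (q - 1) := by
      rw [← Real.rpow_add hx0]
      ring_nf
    have hx2 : x ^ (2 : ℝ) = x ^ 2 := by
      rw [show ((2 : ℝ) = ((2 : ℕ) : ℝ)) by norm_num, Real.rpow_natCast]
    rw [hsplit, hx2]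
    exact mul_le_mul_of_nonneg_left hbase (sq_nonneg x)
  have h4 : 0 ≤ y ^ (q - 1) * (x - y) ^ 2 := by positivity
  have hexp : y ^ (q - 1) * (x - y) ^ 2
      = x ^ 2 * y ^ (q - 1) - 2 * x * (y ^ (q - 1) * y) + (y ^ (q - 1) * y) * y := by
    ring
  rw [hexp, e2] at h4
  nlinarith [h3, e1, h4]

lemma scalar_key_ge_one {q x y : ℝ} (hq1 : 1 ≤ q) (hx : 0 ≤ x)
    (hxy : x ≤ y) : x * (y ^ q - x ^ q) ≤ q * ((y - x) * y ^ q) := by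
  rcases eq_or_lt_of_le (le_trans hx hxy) with h0 | hy0
  · have hx0 : x = 0 := le_antisymm (h0 ▸ hxy) hx
    rw [← h0, hx0]
    simp
  have hdiv : 0 ≤ x / y := div_nonneg hx hy0.le
  have hb : 1 + q * (x / y - 1) ≤ (1 + (x / y - 1)) ^ q :=
    one_add_mul_self_le_rpow_one_add (by linarith) hq1
  have h1 : (1 + (x / y - 1)) = x / y := by ring
  rw [h1] at hb
  have h2 : (x / y) ^ q = x ^ q / y ^ q := Real.div_rpow hx hy0.le q
  have h3 : (0 : ℝ) < y ^ q := Real.rpow_pos_of_pos hy0 q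
  have h4 : (1 + q * (x / y - 1)) * y ^ q ≤ x ^ q := by
    calc (1 + q * (x / y - 1)) * y ^ q ≤ (x / y) ^ q * y ^ q :=
          mul_le_mul_of_nonneg_right hb h3.le
      _ = x ^ q := by rw [h2]; field_simp
  have h5 : y ^ q - x ^ q ≤ q * (1 - x / y) * y ^ q := by nlinarith [h4]
  have h6 : x * (1 - x / y) ≤ y - x := by
    have hle1 : x / y ≤ 1 := (div_le_one hy0).2 hxy
    have := mul_le_mul_of_nonneg_right hxy (by linarith : (0:ℝ) ≤ 1 - x / y)
    have hy : y * (1 - x / y) = y - x := by field_simp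
    linarith [this, hy ▸ this]
  calc x * (y ^ q - x ^ q) ≤ x * (q * (1 - x / y) * y ^ q) := by
        apply mul_le_mul_of_nonneg_left h5 hx
    _ = q * ((x * (1 - x / y)) * y ^ q) := by ring
    _ ≤ q * ((y - x) * y ^ q) := by
        apply mul_le_mul_of_nonneg_left (mul_le_mul_of_nonneg_right h6 h3.le) (by linarith)

lemma scalar_key {q x y : ℝ} (hq : 0 ≤ q) (hx : 0 ≤ x) (hxy : x ≤ y) :
    x * (y ^ q - x ^ q) ≤ max q 1 * ((y - x) * y ^ q) := by
  rcases le_total q 1 with h | h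
  · rw [max_eq_right h, one_mul]
    exact scalar_key_le_one hq h hx hxy
  · rw [max_eq_left h]
    exact scalar_key_ge_one h hx hxy

lemma pFlux_lip_aux {d : ℕ} {p : ℝ} (hp : 2 ≤ p) (a b : EuclideanSpace ℝ (Fin d))
    (hba : ‖b‖ ≤ ‖a‖) :
    ‖pFlux d p a - pFlux d p b‖ ≤ p * (‖a - b‖ * (‖a‖ + ‖b‖) ^ (p - 2)) := by
  set q := p - 2 with hq
  have hq0 : (0 : ℝ) ≤ q := by simp [hq]; linarith
  have hdecomp : pFlux d p a - pFlux d p b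
      = (‖a‖ ^ q) • (a - b) + (‖a‖ ^ q - ‖b‖ ^ q) • b := by
    simp only [pFlux, smul_sub, sub_smul, ← hq]
    abel
  have hmono : ‖b‖ ^ q ≤ ‖a‖ ^ q := Real.rpow_le_rpow (norm_nonneg b) hba hq0
  have hbnn : (0 : ℝ) ≤ ‖a‖ ^ q := Real.rpow_nonneg (norm_nonneg a) q
  have step1 : ‖pFlux d p a - pFlux d p b‖
      ≤ ‖a‖ ^ q * ‖a - b‖ + (‖a‖ ^ q - ‖b‖ ^ q) * ‖b‖ := by
    rw [hdecomp]
    refine le_trans (norm_add_le _ _) ?_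
    rw [norm_smul, norm_smul, Real.norm_eq_abs, Real.norm_eq_abs,
      abs_of_nonneg hbnn, abs_of_nonneg (by linarith)]
  have step2 : (‖a‖ ^ q - ‖b‖ ^ q) * ‖b‖ ≤ max q 1 * ((‖a‖ - ‖b‖) * ‖a‖ ^ q) := by
    rw [mul_comm]
    exact scalar_key hq0 (norm_nonneg b) hba
  have step3 : max q 1 * ((‖a‖ - ‖b‖) * ‖a‖ ^ q) ≤ max q 1 * (‖a - b‖ * ‖a‖ ^ q) := by
    apply mul_le_mul_of_nonneg_left
      (mul_le_mul_of_nonneg_right (norm_sub_norm_le a b) hbnn)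
      (le_trans zero_le_one (le_max_right q 1))
  have step4 : ‖a‖ ^ q * ‖a - b‖ + max q 1 * (‖a - b‖ * ‖a‖ ^ q)
      = (1 + max q 1) * (‖a - b‖ * ‖a‖ ^ q) := by ring
  have h4 : ‖a‖ ^ q ≤ (‖a‖ + ‖b‖) ^ q :=
    Real.rpow_le_rpow (norm_nonneg a) (by linarith [norm_nonneg b]) hq0
  have h5 : 1 + max q 1 ≤ p := by
    rcases le_total q 1 with h | h
    · rw [max_eq_right h]; linarith
    · rw [max_eq_left h]; simp [hq]; linarith
  have final : (1 + max q 1) * (‖a - b‖ * ‖a‖ ^ q)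
      ≤ p * (‖a - b‖ * (‖a‖ + ‖b‖) ^ q) := by
    apply mul_le_mul h5 (mul_le_mul_of_nonneg_left h4 (norm_nonneg _))
      (by positivity) (by linarith)
  linarith [step1, step2, step3, step4 ▸ final]

lemma pFlux_lip {d : ℕ} {p : ℝ} (hp : 2 ≤ p) (a b : EuclideanSpace ℝ (Fin d)) :
    ‖pFlux d p a - pFlux d p b‖ ≤ p * (‖a - b‖ * (‖a‖ + ‖b‖) ^ (p - 2)) := by
  rcases le_total ‖b‖ ‖a‖ with h | h
  · exact pFlux_lip_aux hp a b h
  · have := pFlux_lip_aux hp b a h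
    rwa [norm_sub_rev, norm_sub_rev b a, add_comm ‖b‖ ‖a‖] at this

/-- `L^p`-continuity of the p-Laplace flux in the degenerate range
`p ∈ [2, ∞)`, `p' = p/(p−1)`: there is `C > 0` depending only on `p` such that for every
measure space and all measurable `f, g : Ω → ℝ^d` with `‖f‖_{L^p}, ‖g‖_{L^p} < ∞`,
`‖A∘f − A∘g‖_{L^{p'}} ≤ C ‖f − g‖_{L^p} (‖f‖_{L^p} + ‖g‖_{L^p})^{p−2}`. -/
theorem stmt_13.{u} (d : ℕ) (hd : 1 ≤ d) (p p' : ℝ) (hp : 2 ≤ p)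
    (hp' : p' = p / (p - 1)) :
    ∃ C > (0 : ℝ), ∀ (Ω : Type u) [MeasurableSpace Ω] (μ : Measure Ω)
      (f g : Ω → EuclideanSpace ℝ (Fin d)), Measurable f → Measurable g →
      vecLpNorm μ f p ≠ ⊤ → vecLpNorm μ g p ≠ ⊤ →
      vecLpNorm μ (fun ω => pFlux d p (f ω) - pFlux d p (g ω)) p' ≤
        ENNReal.ofReal C * vecLpNorm μ (fun ω => f ω - g ω) p *
          (vecLpNorm μ f p + vecLpNorm μ g p) ^ (p - 2) := by
  rcases eq_or_lt_of_le hp with hp2 | hp2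
  · -- case p = 2
    subst hp2
    have hp'2 : p' = 2 := by rw [hp']; norm_num
    subst hp'2
    refine ⟨2, by norm_num, ?_⟩
    intro Ω _ μ f g hf hg _ _
    have hfl : ∀ τ : EuclideanSpace ℝ (Fin d), pFlux d 2 τ = τ := fun τ => by
      simp [pFlux, show (2 : ℝ) - 2 = 0 from by norm_num, Real.rpow_zero]
    simp only [hfl]
    rw [show (2 : ℝ) - 2 = 0 from by norm_num, ENNReal.rpow_zero, mul_one]
    exact le_mul_of_one_le_left zero_le (by norm_num [ENNReal.one_le_ofReal])
  · -- case 2 < p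
    have hp1 : (1 : ℝ) < p - 1 := by linarith
    have hp0 : (0 : ℝ) < p := by linarith
    have hq0 : (0 : ℝ) < p - 2 := by linarith
    have hp'pos : 0 < p' := by rw [hp']; positivity
    have hp'val : p' * (p - 1) = p := by rw [hp']; field_simp
    have hconj : (p - 1).HolderConjugate ((p - 1) / (p - 2)) := by
      rw [Real.holderConjugate_iff_eq_conjExponent hp1]
      congr 1
      ring
    refine ⟨p, hp0, ?_⟩
    intro Ω _ μ f g hf hg _ _
    set u : Ω → ENNReal := fun ω => ENNReal.ofReal ‖f ω - g ω‖ with hu_def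
    set v : Ω → ENNReal := fun ω => ENNReal.ofReal (‖f ω‖ + ‖g ω‖) with hv_def
    have hu : Measurable u := ((hf.sub hg).norm).ennreal_ofReal
    have hv : Measurable v := ((hf.norm).add (hg.norm)).ennreal_ofReal
    set c : ENNReal := ENNReal.ofReal (p ^ p') with hc_def
    set X : ENNReal := ∫⁻ ω, u ω ^ p ∂μ with hX_def
    set Y : ENNReal := ∫⁻ ω, v ω ^ p ∂μ with hY_def
    -- pointwise bound
    have hptw : ∀ ω, ENNReal.ofReal (‖pFlux d p (f ω) - pFlux d p (g ω)‖ ^ p') ≤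
        c * (u ω ^ p' * v ω ^ ((p - 2) * p')) := by
      intro ω
      have h1 := pFlux_lip hp (f ω) (g ω)
      have h2 : ‖pFlux d p (f ω) - pFlux d p (g ω)‖ ^ p'
          ≤ (p * (‖f ω - g ω‖ * (‖f ω‖ + ‖g ω‖) ^ (p - 2))) ^ p' :=
        Real.rpow_le_rpow (norm_nonneg _) h1 hp'pos.le
      have h3 : (p * (‖f ω - g ω‖ * (‖f ω‖ + ‖g ω‖) ^ (p - 2))) ^ p'
          = p ^ p' * (‖f ω - g ω‖ ^ p' * (‖f ω‖ + ‖g ω‖) ^ ((p - 2) * p')) := by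
        rw [Real.mul_rpow hp0.le (by positivity),
          Real.mul_rpow (norm_nonneg _) (by positivity),
          Real.rpow_mul (by positivity)]
      calc ENNReal.ofReal (‖pFlux d p (f ω) - pFlux d p (g ω)‖ ^ p')
          ≤ ENNReal.ofReal (p ^ p' * (‖f ω - g ω‖ ^ p' * (‖f ω‖ + ‖g ω‖) ^ ((p - 2) * p'))) := by
            rw [← h3]; exact ENNReal.ofReal_le_ofReal h2
        _ = c * (u ω ^ p' * v ω ^ ((p - 2) * p')) := by
            rw [ENNReal.ofReal_mul (by positivity), ENNReal.ofReal_mul (by positivity),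
              ENNReal.ofReal_rpow_of_nonneg (norm_nonneg _) hp'pos.le,
              ENNReal.ofReal_rpow_of_nonneg (by positivity) (by positivity)]
    have meas_int : Measurable fun ω => u ω ^ p' * v ω ^ ((p - 2) * p') :=
      (hu.pow measurable_const).mul (hv.pow measurable_const)
    have step1 : (∫⁻ ω, ENNReal.ofReal (‖pFlux d p (f ω) - pFlux d p (g ω)‖ ^ p') ∂μ)
        ≤ c * ∫⁻ ω, u ω ^ p' * v ω ^ ((p - 2) * p') ∂μ := by
      rw [← lintegral_const_mul c meas_int]
      exact lintegral_mono hptw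
    have step2 : (∫⁻ ω, u ω ^ p' * v ω ^ ((p - 2) * p') ∂μ)
        ≤ X ^ (1 / (p - 1)) * Y ^ ((p - 2) / (p - 1)) := by
      have h := ENNReal.lintegral_mul_le_Lp_mul_Lq μ hconj
        (hu.pow measurable_const).aemeasurable (hv.pow measurable_const).aemeasurable
        (f := fun ω => u ω ^ p') (g := fun ω => v ω ^ ((p - 2) * p'))
      simp only [Pi.mul_apply] at h
      have e1 : ∀ ω, (u ω ^ p') ^ (p - 1) = u ω ^ p := fun ω => by
        rw [← ENNReal.rpow_mul, hp'val]
      have e2 : ∀ ω, (v ω ^ ((p - 2) * p')) ^ ((p - 1) / (p - 2)) = v ω ^ p := fun ω => by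
        rw [← ENNReal.rpow_mul]
        congr 1
        rw [hp']
        field_simp
      have e3 : 1 / ((p - 1) / (p - 2)) = (p - 2) / (p - 1) := by
        rw [one_div, inv_div]
      simp only [e1, e2, e3] at h
      exact h
    set I : ENNReal := ∫⁻ ω, ENNReal.ofReal (‖pFlux d p (f ω) - pFlux d p (g ω)‖ ^ p') ∂μ
      with hI_def
    have main : I ≤ c * (X ^ (1 / (p - 1)) * Y ^ ((p - 2) / (p - 1))) :=
      step1.trans (mul_le_mul_right step2 c)
    have lhs_le : I ^ (1 / p') ≤ (c * (X ^ (1 / (p - 1)) * Y ^ ((p - 2) / (p - 1)))) ^ (1 / p') :=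
      ENNReal.rpow_le_rpow main (by positivity)
    have ea : 1 / (p - 1) * (1 / p') = 1 / p := by
      rw [hp']; field_simp
    have eb : (p - 2) / (p - 1) * (1 / p') = (p - 2) / p := by
      rw [hp']; field_simp
    have ec : c ^ (1 / p') = ENNReal.ofReal p := by
      rw [show c = ENNReal.ofReal p ^ p' from
          (ENNReal.ofReal_rpow_of_nonneg hp0.le hp'pos.le).symm,
        ← ENNReal.rpow_mul, mul_one_div, div_self hp'pos.ne', ENNReal.rpow_one]
    have hrw : (c * (X ^ (1 / (p - 1)) * Y ^ ((p - 2) / (p - 1)))) ^ (1 / p')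
        = ENNReal.ofReal p * (X ^ (1 / p) * Y ^ ((p - 2) / p)) := by
      rw [ENNReal.mul_rpow_of_nonneg _ _ (by positivity),
        ENNReal.mul_rpow_of_nonneg _ _ (by positivity),
        ← ENNReal.rpow_mul X, ← ENNReal.rpow_mul Y, ea, eb, ec]
    -- identify vecLpNorms
    have idf : vecLpNorm μ f p = (∫⁻ ω, ENNReal.ofReal ‖f ω‖ ^ p ∂μ) ^ (1 / p) := by
      unfold vecLpNorm
      congr 1
      apply lintegral_congr
      intro ω
      rw [ENNReal.ofReal_rpow_of_nonneg (norm_nonneg _) hp0.le]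
    have idg : vecLpNorm μ g p = (∫⁻ ω, ENNReal.ofReal ‖g ω‖ ^ p ∂μ) ^ (1 / p) := by
      unfold vecLpNorm
      congr 1
      apply lintegral_congr
      intro ω
      rw [ENNReal.ofReal_rpow_of_nonneg (norm_nonneg _) hp0.le]
    have idfg : vecLpNorm μ (fun ω => f ω - g ω) p = X ^ (1 / p) := by
      unfold vecLpNorm
      congr 1
      apply lintegral_congr
      intro ω
      rw [ENNReal.ofReal_rpow_of_nonneg (norm_nonneg _) hp0.le]
    -- Minkowski
    have mink : Y ^ (1 / p) ≤ vecLpNorm μ f p + vecLpNorm μ g p := by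
      have h := ENNReal.lintegral_Lp_add_le (μ := μ)
        (f := fun ω => ENNReal.ofReal ‖f ω‖) (g := fun ω => ENNReal.ofReal ‖g ω‖)
        (hf.norm.ennreal_ofReal).aemeasurable (hg.norm.ennreal_ofReal).aemeasurable
        (by linarith : (1 : ℝ) ≤ p)
      simp only [Pi.add_apply] at h
      have hY : Y = ∫⁻ ω, (ENNReal.ofReal ‖f ω‖ + ENNReal.ofReal ‖g ω‖) ^ p ∂μ := by
        rw [hY_def]
        apply lintegral_congr
        intro ω
        rw [hv_def]
        congr 1
        exact ENNReal.ofReal_add (norm_nonneg _) (norm_nonneg _)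
      rw [hY, idf, idg]
      exact h
    have ypow : Y ^ ((p - 2) / p) ≤ (vecLpNorm μ f p + vecLpNorm μ g p) ^ (p - 2) := by
      have h1 : Y ^ ((p - 2) / p) = (Y ^ (1 / p)) ^ (p - 2) := by
        rw [← ENNReal.rpow_mul]
        congr 1
        ring
      rw [h1]
      exact ENNReal.rpow_le_rpow mink hq0.le
    calc vecLpNorm μ (fun ω => pFlux d p (f ω) - pFlux d p (g ω)) p' = I ^ (1 / p') := rfl
      _ ≤ ENNReal.ofReal p * (X ^ (1 / p) * Y ^ ((p - 2) / p)) := lhs_le.trans_eq hrw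
      _ ≤ ENNReal.ofReal p * (X ^ (1 / p) * (vecLpNorm μ f p + vecLpNorm μ g p) ^ (p - 2)) :=
          mul_le_mul_right (mul_le_mul_right ypow _) _
      _ = ENNReal.ofReal p * vecLpNorm μ (fun ω => f ω - g ω) p *
            (vecLpNorm μ f p + vecLpNorm μ g p) ^ (p - 2) := by
          rw [idfg, mul_assoc]
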